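/- Let A be a Hopf algebra over a commutative ring k with comultiplication Δ (an algebra homomorphism A → A⊗A), counit ε and antipode S, and let ψ : A → k be a right-invariant k-linear functional, i.e. (ψ⊗id)(Δ(a)) = ψ(a)·1 for all a ∈ A, where (ψ⊗id) : A⊗A → A is the induced linear map. Let u be a unit of A, v a central unit of A, F a unit of A⊗A, and set g = u·v⁻¹. Assume v·v = u·S(u), Δ(u) = F⁻¹·(u⊗u), Δ(S(u)) = (S(u)⊗S(u))·F⁻¹ and Δ(v) = F⁻¹·(v⊗v). Let z be a central element of A with S(z) = z and (1⊗z)·Δ(z) = z⊗z. Define X_z = S(u⁻¹)·(ψ⊗id)((g·z ⊗ 1)·Δ(S(u))) − ψ(z·v)·v⁻¹ and Y_z = u·(ψ⊗id)((g·z ⊗ 1)·Δ(u⁻¹)) − ψ(z·v⁻¹)·v. Then z·X_z = 0 and z·Y_z = 0. -/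

import Mathlib

open TensorProduct Coalgebra Bialgebra HopfAlgebra

/-- The linear map `ψ ⊗ id : A ⊗ A → A`, sending `a ⊗ b` to `ψ(a) • b`. -/
noncomputable def psiTensorId {k A : Type*} [CommRing k] [Ring A] [Algebra k A]
    (ψ : A →ₗ[k] k) : A ⊗[k] A →ₗ[k] A :=
  TensorProduct.lift ((LinearMap.lsmul k A).comp ψ)

namespace HopfAux

variable {k A : Type*} [CommRing k] [Ring A] [HopfAlgebra k A]

lemma sum_counit_smul_right {a : A} {ι : Type*} (r : Coalgebra.Repr k a ι) :
    ∑ i ∈ r.index, counit (R := k) (r.left i) • r.right i = a := by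
  calc ∑ i ∈ r.index, counit (R := k) (r.left i) • r.right i
      = TensorProduct.lid k A (∑ i ∈ r.index, counit (R := k) (r.left i) ⊗ₜ[k] r.right i) := by
        rw [map_sum]; simp
    _ = TensorProduct.lid k A ((1:k) ⊗ₜ[k] a) := congrArg _ (Coalgebra.sum_counit_tmul_eq r)
    _ = a := by simp

lemma sum_counit_smul_left {a : A} {ι : Type*} (r : Coalgebra.Repr k a ι) :
    ∑ i ∈ r.index, counit (R := k) (r.right i) • r.left i = a := by
  calc ∑ i ∈ r.index, counit (R := k) (r.right i) • r.left i
      = TensorProduct.rid k A (∑ i ∈ r.index, r.left i ⊗ₜ[k] counit (R := k) (r.right i)) := by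
        rw [map_sum]; simp
    _ = TensorProduct.rid k A (a ⊗ₜ[k] (1:k)) := congrArg _ (Coalgebra.sum_tmul_counit_eq r)
    _ = a := by simp

/-- A representation of `comul (a * b)` built from representations of `a` and `b`. -/
noncomputable def mulRepr {a b : A} {ι κ : Type*} (ra : Coalgebra.Repr k a ι)
    (rb : Coalgebra.Repr k b κ) :
    Coalgebra.Repr k (a * b) (ι × κ) where
  index := ra.index ×ˢ rb.index
  left := fun p => ra.left p.1 * rb.left p.2
  right := fun p => ra.right p.1 * rb.right p.2
  eq := by
    rw [Finset.sum_product]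
    rw [show CoalgebraStruct.comul (R := k) (a * b) = comul (R := k) a * comul (R := k) b from
      Bialgebra.comul_mul a b, ← ra.eq, ← rb.eq, Finset.sum_mul_sum]
    simp [Algebra.TensorProduct.tmul_mul_tmul]

lemma star_a {a : A} {ι : Type*} {κ : ι → Type*} (r : Coalgebra.Repr k a ι)
    (t : (i : ι) → Coalgebra.Repr k (r.right i) (κ i)) :
    ∑ i ∈ r.index, ∑ j ∈ (t i).index,
      (antipode (R := k) (r.left i) * (t i).left j) ⊗ₜ[k] (t i).right j
      = (1 : A) ⊗ₜ[k] a := by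
  classical
  have h := Coalgebra.sum_tmul_tmul_eq (R := k) r (fun i => ℛ k (r.left i)) t
  have h2 := congrArg
    (((LinearMap.mul' k A ∘ₗ (antipode (R := k) (A := A)).rTensor A).rTensor A) ∘ₗ
      ((TensorProduct.assoc k A A A).symm :
        A ⊗[k] (A ⊗[k] A) ≃ₗ[k] (A ⊗[k] A) ⊗[k] A).toLinearMap) h
  simp only [map_sum, LinearMap.comp_apply, LinearEquiv.coe_coe,
    TensorProduct.assoc_symm_tmul, LinearMap.rTensor_tmul, LinearMap.mul'_apply] at h2
  rw [← h2]
  have : ∀ i ∈ r.index, ∑ j ∈ (ℛ k (r.left i)).index,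
      (antipode (R := k) ((ℛ k (r.left i)).left j) * (ℛ k (r.left i)).right j) ⊗ₜ[k] r.right i
      = (1 : A) ⊗ₜ[k] (counit (R := k) (r.left i) • r.right i) := by
    intro i _
    rw [← TensorProduct.sum_tmul, HopfAlgebra.sum_antipode_mul_eq_smul (ℛ k (r.left i))]
    rw [TensorProduct.smul_tmul]
  rw [Finset.sum_congr rfl this, ← TensorProduct.tmul_sum, sum_counit_smul_right r]


lemma antipode_one' : antipode (R := k) (1 : A) = 1 := by
  have h := HopfAlgebra.sum_antipode_mul_eq_smul (R := k)
    (⟨({0} : Finset ℕ), fun _ => (1 : A), fun _ => (1 : A), by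
      simp [← Algebra.TensorProduct.one_def]⟩ : Coalgebra.Repr k (1 : A) ℕ)
  simpa using h

lemma antipode_mul_rev (a b : A) :
    antipode (R := k) b * antipode (R := k) a = antipode (R := k) (a * b) := by
  classical
  set r := ℛ k a with hr
  set s := ℛ k b with hs
  set t : (i : r.ι) → Coalgebra.Repr k (r.right i) (A × A) := fun i => ℛ k (r.right i) with ht
  set w : (j : s.ι) → Coalgebra.Repr k (s.right j) (A × A) := fun j => ℛ k (s.right j) with hw
  -- step 2
  have step2 : ∀ (i : r.ι) (j : s.ι),
      ∑ p ∈ (t i).index, ∑ q ∈ (w j).index,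
        ((t i).left p * (w j).left q) *
          antipode (R := k) ((t i).right p * (w j).right q)
      = (counit (R := k) (r.right i) * counit (R := k) (s.right j)) • (1 : A) := by
    intro i j
    have h := HopfAlgebra.sum_mul_antipode_eq_smul (R := k) (mulRepr (t i) (w j))
    simp only [mulRepr] at h
    rw [Finset.sum_product] at h
    simpa using h
  -- step A : S b * S a equals the quadruple sum
  have stepA : antipode (R := k) b * antipode (R := k) a
      = ∑ j ∈ s.index, ∑ i ∈ r.index,
          antipode (R := k) (s.left j) * antipode (R := k) (r.left i) *
            (∑ p ∈ (t i).index, ∑ q ∈ (w j).index,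
              ((t i).left p * (w j).left q) *
                antipode (R := k) ((t i).right p * (w j).right q)) := by
    have ha : antipode (R := k) a
        = ∑ i ∈ r.index, counit (R := k) (r.right i) • antipode (R := k) (r.left i) := by
      conv_lhs => rw [← sum_counit_smul_left r]
      rw [map_sum]; simp
    have hb : antipode (R := k) b
        = ∑ j ∈ s.index, counit (R := k) (s.right j) • antipode (R := k) (s.left j) := by
      conv_lhs => rw [← sum_counit_smul_left s]
      rw [map_sum]; simp
    rw [ha, hb, Finset.sum_mul_sum]
    refine Finset.sum_congr rfl fun j _ => Finset.sum_congr rfl fun i _ => ?_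
    rw [step2 i j, smul_mul_smul_comm, mul_comm (counit (R := k) (s.right j)),
      mul_smul_comm, mul_one]
  -- regroup and contract the `a`-part
  have stepB : ∀ j : s.ι,
      ∑ i ∈ r.index,
        antipode (R := k) (s.left j) * antipode (R := k) (r.left i) *
          (∑ p ∈ (t i).index, ∑ q ∈ (w j).index,
            ((t i).left p * (w j).left q) *
              antipode (R := k) ((t i).right p * (w j).right q))
      = ∑ q ∈ (w j).index,
          (antipode (R := k) (s.left j) * (w j).left q) *
            antipode (R := k) (a * (w j).right q) := by
    intro j
    have key : ∀ q : (w j).ι,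
        ∑ i ∈ r.index, ∑ p ∈ (t i).index,
          (antipode (R := k) (s.left j) *
              ((antipode (R := k) (r.left i) * (t i).left p) * (w j).left q)) *
            antipode (R := k) ((t i).right p * (w j).right q)
        = (antipode (R := k) (s.left j) * ((1 : A) * (w j).left q)) *
            antipode (R := k) (a * (w j).right q) := by
      intro q
      have hphi := congrArg (LinearMap.mul' k A ∘ₗ TensorProduct.map
        ((LinearMap.mulLeft k (antipode (R := k) (s.left j))) ∘ₗ
          (LinearMap.mulRight k ((w j).left q)))
        ((antipode (R := k) (A := A)) ∘ₗ (LinearMap.mulRight k ((w j).right q))))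
        (star_a r t)
      simpa [map_sum] using hphi
    calc ∑ i ∈ r.index,
        antipode (R := k) (s.left j) * antipode (R := k) (r.left i) *
          (∑ p ∈ (t i).index, ∑ q ∈ (w j).index,
            ((t i).left p * (w j).left q) *
              antipode (R := k) ((t i).right p * (w j).right q))
        = ∑ i ∈ r.index, ∑ q ∈ (w j).index, ∑ p ∈ (t i).index,
            (antipode (R := k) (s.left j) *
                ((antipode (R := k) (r.left i) * (t i).left p) * (w j).left q)) *
              antipode (R := k) ((t i).right p * (w j).right q) := by
          refine Finset.sum_congr rfl fun i _ => ?_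
          simp_rw [Finset.mul_sum]
          rw [Finset.sum_comm]
          exact Finset.sum_congr rfl fun q _ => Finset.sum_congr rfl fun p _ => by
            simp [mul_assoc]
      _ = ∑ q ∈ (w j).index, ∑ i ∈ r.index, ∑ p ∈ (t i).index,
            (antipode (R := k) (s.left j) *
                ((antipode (R := k) (r.left i) * (t i).left p) * (w j).left q)) *
              antipode (R := k) ((t i).right p * (w j).right q) := Finset.sum_comm
      _ = ∑ q ∈ (w j).index,
            (antipode (R := k) (s.left j) * ((1 : A) * (w j).left q)) *
              antipode (R := k) (a * (w j).right q) :=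
          Finset.sum_congr rfl fun q _ => key q
      _ = _ := by simp
  -- final contraction of the `b`-part
  have hfin := congrArg (LinearMap.mul' k A ∘ₗ TensorProduct.map
      (LinearMap.id : A →ₗ[k] A)
      ((antipode (R := k) (A := A)) ∘ₗ (LinearMap.mulLeft k a))) (star_a s w)
  rw [stepA, Finset.sum_congr rfl fun j _ => stepB j]
  simpa [map_sum] using hfin


lemma psiTensorId_one_tmul_mul (ψ : A →ₗ[k] k) (c : A) (T : A ⊗[k] A) :
    psiTensorId ψ (((1:A) ⊗ₜ[k] c) * T) = c * psiTensorId ψ T := by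
  induction T using TensorProduct.induction_on with
  | zero => simp
  | tmul a b => simp [psiTensorId, Algebra.TensorProduct.tmul_mul_tmul, mul_smul_comm]
  | add x y hx hy => rw [mul_add, map_add, map_add, mul_add, hx, hy]

lemma tmul_central_comm {c d : A} (hc : ∀ x, c * x = x * c) (hd : ∀ x, d * x = x * d)
    (T : A ⊗[k] A) : (c ⊗ₜ[k] d) * T = T * (c ⊗ₜ[k] d) := by
  induction T using TensorProduct.induction_on with
  | zero => simp
  | tmul a b => rw [Algebra.TensorProduct.tmul_mul_tmul,
      Algebra.TensorProduct.tmul_mul_tmul, hc, hd]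
  | add x y hx hy => rw [mul_add, add_mul, hx, hy]

lemma comul_swap {z : A} (hzc : ∀ x, z * x = x * z)
    (hΔz : ((1:A) ⊗ₜ[k] z) * comul (R := k) z = z ⊗ₜ[k] z) (w : A) :
    (z ⊗ₜ[k] (1:A)) * comul (R := k) w * ((1:A) ⊗ₜ[k] z)
      = ((1:A) ⊗ₜ[k] z) * comul (R := k) (w * z) := by
  have h1 : ∀ T : A ⊗[k] A, ((1:A) ⊗ₜ[k] z) * T = T * ((1:A) ⊗ₜ[k] z) :=
    tmul_central_comm (fun x => by rw [one_mul, mul_one]) hzc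
  have h2 : ∀ T : A ⊗[k] A, (z ⊗ₜ[k] (1:A)) * T = T * (z ⊗ₜ[k] (1:A)) :=
    tmul_central_comm hzc (fun x => by rw [one_mul, mul_one])
  symm
  calc ((1:A) ⊗ₜ[k] z) * comul (R := k) (w * z)
      = comul (R := k) w * (((1:A) ⊗ₜ[k] z) * comul (R := k) z) := by
        rw [Bialgebra.comul_mul, ← mul_assoc, h1 (comul (R := k) w), mul_assoc]
    _ = comul (R := k) w * ((z ⊗ₜ[k] (1:A)) * ((1:A) ⊗ₜ[k] z)) := by
        rw [hΔz, Algebra.TensorProduct.tmul_mul_tmul, mul_one, one_mul]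
    _ = (z ⊗ₜ[k] (1:A)) * comul (R := k) w * ((1:A) ⊗ₜ[k] z) := by
        rw [← mul_assoc, ← h2 (comul (R := k) w)]

lemma key_psi (ψ : A →ₗ[k] k)
    (hinv : ∀ a : A, psiTensorId ψ (comul (R := k) a) = ψ a • (1 : A))
    {z : A} (hzc : ∀ x, z * x = x * z)
    (hΔz : ((1:A) ⊗ₜ[k] z) * comul (R := k) z = z ⊗ₜ[k] z) (c w : A) :
    z * psiTensorId ψ ((z ⊗ₜ[k] (1:A)) * (((1:A) ⊗ₜ[k] c) * comul (R := k) w))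
      = ψ (w * z) • (c * z) := by
  have h1 : ∀ T : A ⊗[k] A, ((1:A) ⊗ₜ[k] z) * T = T * ((1:A) ⊗ₜ[k] z) :=
    tmul_central_comm (fun x => by rw [one_mul, mul_one]) hzc
  rw [← psiTensorId_one_tmul_mul ψ z]
  have hE : ((1:A) ⊗ₜ[k] z) * ((z ⊗ₜ[k] (1:A)) * (((1:A) ⊗ₜ[k] c) * comul (R := k) w))
      = ((1:A) ⊗ₜ[k] (c * z)) * comul (R := k) (w * z) := by
    calc ((1:A) ⊗ₜ[k] z) * ((z ⊗ₜ[k] (1:A)) * (((1:A) ⊗ₜ[k] c) * comul (R := k) w))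
        = (z ⊗ₜ[k] (c * z)) * comul (R := k) w := by
          rw [← mul_assoc, ← mul_assoc, Algebra.TensorProduct.tmul_mul_tmul,
            Algebra.TensorProduct.tmul_mul_tmul]
          simp only [one_mul, mul_one]
          rw [hzc c]
      _ = ((z ⊗ₜ[k] c) * ((1:A) ⊗ₜ[k] z)) * comul (R := k) w := by
          rw [Algebra.TensorProduct.tmul_mul_tmul, mul_one]
      _ = (z ⊗ₜ[k] c) * (comul (R := k) w * ((1:A) ⊗ₜ[k] z)) := by
          rw [mul_assoc, ← h1 (comul (R := k) w)]
      _ = ((1:A) ⊗ₜ[k] c) * ((z ⊗ₜ[k] (1:A)) * comul (R := k) w * ((1:A) ⊗ₜ[k] z)) := by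
          conv_rhs => rw [← mul_assoc, ← mul_assoc, Algebra.TensorProduct.tmul_mul_tmul,
            one_mul, mul_one]
          rw [← mul_assoc]
      _ = ((1:A) ⊗ₜ[k] c) * (((1:A) ⊗ₜ[k] z) * comul (R := k) (w * z)) := by
          rw [comul_swap hzc hΔz w]
      _ = ((1:A) ⊗ₜ[k] (c * z)) * comul (R := k) (w * z) := by
          rw [← mul_assoc, Algebra.TensorProduct.tmul_mul_tmul, one_mul]
  rw [hE, psiTensorId_one_tmul_mul, hinv, mul_smul_comm, mul_one]

end HopfAux

/-- Equation (3.3) of Proposition 3.2 (unital case): with a right-invariant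
functional `ψ`, ribbon data `u, v, F`, `g = u·v⁻¹`, and a central element `z`
with `S(z) = z` and `(1⊗z)Δ(z) = z⊗z`, the elements
`X_z = S(u⁻¹)·(ψ⊗id)((gz⊗1)Δ(S(u))) − ψ(zv)·v⁻¹` and
`Y_z = u·(ψ⊗id)((gz⊗1)Δ(u⁻¹)) − ψ(zv⁻¹)·v` satisfy `z·X_z = z·Y_z = 0`. -/
theorem z_mul_X_z_eq_zero {k A : Type*} [CommRing k] [Ring A] [HopfAlgebra k A]
    (ψ : A →ₗ[k] k)
    (hinv : ∀ a : A, psiTensorId ψ (comul (R := k) a) = ψ a • (1 : A))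
    (u v : Aˣ) (F : (A ⊗[k] A)ˣ)
    (hvc : ∀ x : A, (v : A) * x = x * (v : A))
    (g : A) (hg : g = (u : A) * (↑v⁻¹ : A))
    (hv2 : (v : A) * (v : A) = (u : A) * antipode (R := k) (u : A))
    (hΔu : comul (R := k) (u : A) = (↑F⁻¹ : A ⊗[k] A) * ((u : A) ⊗ₜ[k] (u : A)))
    (hΔSu : comul (R := k) (antipode (R := k) (u : A)) =
      ((antipode (R := k) (u : A)) ⊗ₜ[k] (antipode (R := k) (u : A))) * (↑F⁻¹ : A ⊗[k] A))
    (hΔv : comul (R := k) (v : A) = (↑F⁻¹ : A ⊗[k] A) * ((v : A) ⊗ₜ[k] (v : A)))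
    (z : A) (hzc : ∀ x : A, z * x = x * z)
    (hSz : antipode (R := k) z = z)
    (hΔz : ((1 : A) ⊗ₜ[k] z) * comul (R := k) z = z ⊗ₜ[k] z)
    (X Y : A)
    (hX : X = antipode (R := k) (↑u⁻¹ : A) *
        psiTensorId ψ (((g * z) ⊗ₜ[k] (1 : A)) * comul (R := k) (antipode (R := k) (u : A)))
      - ψ (z * (v : A)) • (↑v⁻¹ : A))
    (hY : Y = (u : A) *
        psiTensorId ψ (((g * z) ⊗ₜ[k] (1 : A)) * comul (R := k) (↑u⁻¹ : A))
      - ψ (z * (↑v⁻¹ : A)) • (v : A)) :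
    z * X = 0 ∧ z * Y = 0 := by
  have S1 : antipode (R := k) (↑u⁻¹ : A) * antipode (R := k) (u : A) = 1 := by
    rw [HopfAux.antipode_mul_rev, Units.mul_inv, HopfAux.antipode_one']
  have hvinv : ∀ x : A, (↑v⁻¹ : A) * x = x * (↑v⁻¹ : A) := fun x => by
    calc (↑v⁻¹ : A) * x = ↑v⁻¹ * (x * ↑v) * ↑v⁻¹ := by
          rw [mul_assoc, mul_assoc, Units.mul_inv, mul_one]
      _ = ↑v⁻¹ * ((v:A) * x) * ↑v⁻¹ := by rw [← hvc x]
      _ = x * ↑v⁻¹ := by rw [← mul_assoc, Units.inv_mul, one_mul]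
  have hFinv : (↑F⁻¹ : A ⊗[k] A)
      = comul (R := k) (v : A) * ((↑v⁻¹ : A) ⊗ₜ[k] (↑v⁻¹ : A)) := by
    rw [hΔv, mul_assoc, Algebra.TensorProduct.tmul_mul_tmul, Units.mul_inv,
      ← Algebra.TensorProduct.one_def, mul_one]
  have hΔvv : comul (R := k) (v : A) * comul (R := k) (↑v⁻¹ : A) = 1 := by
    rw [← Bialgebra.comul_mul, Units.mul_inv, Bialgebra.comul_one]
  have hF : (↑F : A ⊗[k] A)
      = ((v : A) ⊗ₜ[k] (v : A)) * comul (R := k) (↑v⁻¹ : A) := by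
    calc (↑F : A ⊗[k] A)
        = ↑F * (comul (R := k) (v : A) * comul (R := k) (↑v⁻¹ : A)) := by
          rw [hΔvv, mul_one]
      _ = (↑F * ↑F⁻¹) * (((v : A) ⊗ₜ[k] (v : A)) * comul (R := k) (↑v⁻¹ : A)) := by
          rw [hΔv]; simp [mul_assoc]
      _ = _ := by rw [Units.mul_inv, one_mul]
  -- comul of S(u)
  have hc : comul (R := k) (antipode (R := k) (u : A))
      = ((antipode (R := k) (u : A) * ↑v⁻¹) ⊗ₜ[k] (antipode (R := k) (u : A) * ↑v⁻¹)) *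
        comul (R := k) (v : A) := by
    rw [hΔSu, hFinv, ← mul_assoc,
      ← HopfAux.tmul_central_comm hvinv hvinv
        ((antipode (R := k) (u : A) ⊗ₜ[k] antipode (R := k) (u : A)) * comul (R := k) (v : A)),
      ← mul_assoc, Algebra.TensorProduct.tmul_mul_tmul,
      hvinv (antipode (R := k) (u : A))]
  -- comul of u⁻¹
  have hΔu1 : comul (R := k) (↑u⁻¹ : A)
      = (((↑u⁻¹ : A) * ↑v) ⊗ₜ[k] ((↑u⁻¹ : A) * ↑v)) * comul (R := k) (↑v⁻¹ : A) := by
    have huu : comul (R := k) (u : A) * comul (R := k) (↑u⁻¹ : A) = 1 := by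
      rw [← Bialgebra.comul_mul, Units.mul_inv, Bialgebra.comul_one]
    have hw : (((↑u⁻¹ : A) ⊗ₜ[k] (↑u⁻¹ : A)) * (↑F : A ⊗[k] A)) * comul (R := k) (u : A)
        = 1 := by
      rw [hΔu]
      calc (((↑u⁻¹:A) ⊗ₜ[k] (↑u⁻¹:A)) * ↑F) * ((↑F⁻¹ : A ⊗[k] A) * ((u:A) ⊗ₜ[k] (u:A)))
          = ((↑u⁻¹:A) ⊗ₜ[k] (↑u⁻¹:A)) * ((↑F * ↑F⁻¹ : A ⊗[k] A) * ((u:A) ⊗ₜ[k] (u:A))) := by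
            simp [mul_assoc]
        _ = 1 := by
            rw [Units.mul_inv, one_mul, Algebra.TensorProduct.tmul_mul_tmul, Units.inv_mul,
              ← Algebra.TensorProduct.one_def]
    calc comul (R := k) (↑u⁻¹ : A) = 1 * comul (R := k) (↑u⁻¹ : A) := (one_mul _).symm
      _ = ((((↑u⁻¹ : A) ⊗ₜ[k] (↑u⁻¹ : A)) * ↑F) * comul (R := k) (u : A)) *
            comul (R := k) (↑u⁻¹ : A) := by rw [hw]
      _ = (((↑u⁻¹ : A) ⊗ₜ[k] (↑u⁻¹ : A)) * ↑F) *
            (comul (R := k) (u : A) * comul (R := k) (↑u⁻¹ : A)) := by simp [mul_assoc]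
      _ = ((↑u⁻¹ : A) ⊗ₜ[k] (↑u⁻¹ : A)) * (↑F : A ⊗[k] A) := by rw [huu, mul_one]
      _ = ((↑u⁻¹ : A) ⊗ₜ[k] (↑u⁻¹ : A)) * (((v : A) ⊗ₜ[k] (v : A)) * comul (R := k) (↑v⁻¹ : A)) := by
          rw [hF]
      _ = _ := by rw [← mul_assoc, Algebra.TensorProduct.tmul_mul_tmul]
  -- the two `g·z·c = z` computations
  have hgzc : g * z * (antipode (R := k) (u : A) * ↑v⁻¹) = z := by
    have hins : (u : A) * ↑v⁻¹ * (antipode (R := k) (u : A) * ↑v⁻¹) = 1 := by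
      calc (u : A) * ↑v⁻¹ * (antipode (R := k) (u : A) * ↑v⁻¹)
          = (u : A) * ((↑v⁻¹ : A) * antipode (R := k) (u : A)) * ↑v⁻¹ := by
            simp [mul_assoc]
        _ = (u : A) * (antipode (R := k) (u : A) * ↑v⁻¹) * ↑v⁻¹ := by
            rw [hvinv (antipode (R := k) (u : A))]
        _ = ((u : A) * antipode (R := k) (u : A)) * ((↑v⁻¹ : A) * ↑v⁻¹) := by
            simp [mul_assoc]
        _ = ((v : A) * (v : A)) * ((↑v⁻¹ : A) * ↑v⁻¹) := by rw [← hv2]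
        _ = 1 := by
            rw [mul_assoc, ← mul_assoc (v : A) (↑v⁻¹ : A), Units.mul_inv, one_mul,
              Units.mul_inv]
    calc g * z * (antipode (R := k) (u : A) * ↑v⁻¹)
        = z * ((u : A) * ↑v⁻¹ * (antipode (R := k) (u : A) * ↑v⁻¹)) := by
          rw [hg, ← hzc ((u : A) * ↑v⁻¹), mul_assoc]
      _ = z := by rw [hins, mul_one]
  have hgzc' : g * z * ((↑u⁻¹ : A) * ↑v) = z := by
    have hins : (u : A) * ↑v⁻¹ * ((↑u⁻¹ : A) * ↑v) = 1 := by
      calc (u : A) * ↑v⁻¹ * ((↑u⁻¹ : A) * ↑v)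
          = (u : A) * ((↑v⁻¹ : A) * ↑u⁻¹) * ↑v := by simp [mul_assoc]
        _ = (u : A) * ((↑u⁻¹ : A) * ↑v⁻¹) * ↑v := by rw [hvinv (↑u⁻¹ : A)]
        _ = ((u : A) * ↑u⁻¹) * ((↑v⁻¹ : A) * ↑v) := by simp [mul_assoc]
        _ = 1 := by rw [Units.mul_inv, Units.inv_mul, one_mul]
    calc g * z * ((↑u⁻¹ : A) * ↑v)
        = z * ((u : A) * ↑v⁻¹ * ((↑u⁻¹ : A) * ↑v)) := by
          rw [hg, ← hzc ((u : A) * ↑v⁻¹), mul_assoc]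
      _ = z := by rw [hins, mul_one]
  -- rewriting the tensor arguments
  have hX1 : ((g * z) ⊗ₜ[k] (1 : A)) * comul (R := k) (antipode (R := k) (u : A))
      = (z ⊗ₜ[k] (1 : A)) *
        (((1 : A) ⊗ₜ[k] (antipode (R := k) (u : A) * ↑v⁻¹)) * comul (R := k) (v : A)) := by
    rw [hc]
    conv_lhs => rw [← mul_assoc, Algebra.TensorProduct.tmul_mul_tmul, hgzc, one_mul]
    conv_rhs => rw [← mul_assoc, Algebra.TensorProduct.tmul_mul_tmul, one_mul, mul_one]
  have hY1 : ((g * z) ⊗ₜ[k] (1 : A)) * comul (R := k) (↑u⁻¹ : A)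
      = (z ⊗ₜ[k] (1 : A)) *
        (((1 : A) ⊗ₜ[k] ((↑u⁻¹ : A) * ↑v)) * comul (R := k) (↑v⁻¹ : A)) := by
    rw [hΔu1]
    conv_lhs => rw [← mul_assoc, Algebra.TensorProduct.tmul_mul_tmul, hgzc', one_mul]
    conv_rhs => rw [← mul_assoc, Algebra.TensorProduct.tmul_mul_tmul, one_mul, mul_one]
  constructor
  · -- z * X = 0
    rw [hX, mul_sub]
    rw [← mul_assoc, hzc (antipode (R := k) (↑u⁻¹ : A)), mul_assoc, hX1,
      HopfAux.key_psi ψ hinv hzc hΔz (antipode (R := k) (u : A) * ↑v⁻¹) (v : A)]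
    rw [mul_smul_comm, mul_smul_comm]
    rw [← mul_assoc, ← mul_assoc, S1, one_mul, hvinv z, ← hvc z]
    exact sub_self _
  · -- z * Y = 0
    rw [hY, mul_sub]
    rw [← mul_assoc, hzc (u : A), mul_assoc, hY1,
      HopfAux.key_psi ψ hinv hzc hΔz ((↑u⁻¹ : A) * ↑v) (↑v⁻¹ : A)]
    rw [mul_smul_comm, mul_smul_comm]
    rw [← mul_assoc, ← mul_assoc, Units.mul_inv, one_mul, ← hvc z, hvinv z]
    exact sub_self _
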